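/- Let d ≥ 1 and let k, l, a ∈ ℝ^d with k ≠ 0, k + l ≠ 0, k − l ≠ 0, |a| = 1 and ⟨a,l⟩ = 0. Then ⟨a,k⟩² / (|k+l|²·|k−l|²) ≤ 1/|k|². -/
import Mathlib


noncomputable section

/-- Euclidean inner product on `ℝ^d`. -/
def ipV {d : ℕ} (v w : Fin d → ℝ) : ℝ := ∑ i, v i * w i

/-- Squared Euclidean norm on `ℝ^d`. -/
def nsqV {d : ℕ} (v : Fin d → ℝ) : ℝ := ∑ i, (v i) ^ 2

lemma nsqV_nonneg {d : ℕ} (v : Fin d → ℝ) : 0 ≤ nsqV v :=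
  Finset.sum_nonneg fun i _ => sq_nonneg _

lemma nsqV_pos {d : ℕ} {v : Fin d → ℝ} (hv : v ≠ 0) : 0 < nsqV v := by
  rcases (nsqV_nonneg v).lt_or_eq with h | h
  · exact h
  · exfalso
    apply hv
    funext i
    have := (Finset.sum_eq_zero_iff_of_nonneg (fun i _ => sq_nonneg (v i))).mp h.symm
    have hi := this i (Finset.mem_univ i)
    simpa using pow_eq_zero_iff (n := 2) (by norm_num) |>.mp hi

lemma cs {d : ℕ} (v w : Fin d → ℝ) : ipV v w ^ 2 ≤ nsqV v * nsqV w := by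
  simpa [ipV, nsqV] using Finset.sum_mul_sq_le_sq_mul_sq Finset.univ v w

lemma ip_add {d : ℕ} (a k l : Fin d → ℝ) : ipV a (k + l) = ipV a k + ipV a l := by
  simp [ipV, mul_add, Finset.sum_add_distrib]

lemma ip_sub {d : ℕ} (a k l : Fin d → ℝ) : ipV a (k - l) = ipV a k - ipV a l := by
  simp [ipV, mul_sub, Finset.sum_sub_distrib]

lemma parallelogram {d : ℕ} (k l : Fin d → ℝ) :
    nsqV (k + l) + nsqV (k - l) = 2 * nsqV k + 2 * nsqV l := by
  simp only [nsqV, ← Finset.sum_add_distrib, Finset.mul_sum]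
  apply Finset.sum_congr rfl
  intro i _
  simp [Pi.add_apply, Pi.sub_apply]
  ring

theorem stmt17 (d : ℕ) (hd : 1 ≤ d) (k l a : Fin d → ℝ)
    (hk : k ≠ 0) (hkl : k + l ≠ 0) (hkl' : k - l ≠ 0)
    (ha : nsqV a = 1) (hal : ipV a l = 0) :
    ipV a k ^ 2 / (nsqV (k + l) * nsqV (k - l)) ≤ 1 / nsqV k := by
  have hP : 0 < nsqV (k + l) := nsqV_pos hkl
  have hQ : 0 < nsqV (k - l) := nsqV_pos hkl'
  have hK : 0 < nsqV k := nsqV_pos hk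
  have hL : 0 ≤ nsqV l := nsqV_nonneg l
  have h1 : ipV a k ^ 2 ≤ nsqV (k + l) := by
    have := cs a (k + l)
    rw [ip_add, hal, ha, one_mul, add_zero] at this
    exact this
  have h2 : ipV a k ^ 2 ≤ nsqV (k - l) := by
    have := cs a (k - l)
    rw [ip_sub, hal, ha, one_mul, sub_zero] at this
    exact this
  have hpar := parallelogram k l
  rw [div_le_div_iff₀ (by positivity) hK, one_mul]
  rcases le_total (nsqV (k + l)) (nsqV (k - l)) with h | h
  · nlinarith [sq_nonneg (ipV a k)]
  · nlinarith [sq_nonneg (ipV a k)]
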